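/- For b > 0 with b ≠ 1, every solution of the ODE (1-x²)²Ω''(x) - 2(1-b)x(1-x²)Ω'(x) - (1-b²)Ω(x) = 0 on (0,1) with Ω(0) = 0 and Ω'(0) = C is given by Ω(x) = C·x·(1-x²)^{(b-1)/2}·₂F₁((1-b)/2, b/2; 3/2; x²). -/

import Mathlib

open Real Set

/-- The Gaussian hypergeometric function ₂F₁(a,b;c;x) as a power series. -/
noncomputable def twoF1 (a b c x : ℝ) : ℝ :=
  ∑' n : ℕ, ((ascPochhammer ℝ n).eval a * (ascPochhammer ℝ n).eval b)
    / ((ascPochhammer ℝ n).eval c * (n.factorial : ℝ)) * x ^ n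


noncomputable def cc (b : ℝ) (n : ℕ) : ℝ :=
  ((ascPochhammer ℝ n).eval ((1-b)/2) * (ascPochhammer ℝ n).eval (b/2))
    / ((ascPochhammer ℝ n).eval (3/2) * (n.factorial : ℝ))

lemma poch32_pos (n : ℕ) : 0 < (ascPochhammer ℝ n).eval (3/2 : ℝ) :=
  ascPochhammer_pos n _ (by norm_num)

lemma poch_succ (y : ℝ) (n : ℕ) :
    (ascPochhammer ℝ (n+1)).eval y = (ascPochhammer ℝ n).eval y * (y + n) := by
  rw [ascPochhammer_succ_right]
  simp

lemma cc_zero (b : ℝ) : cc b 0 = 1 := by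
  simp [cc, ascPochhammer_zero]

lemma cc_rec (b : ℝ) (n : ℕ) :
    cc b (n+1) * ((3/2 + n) * (n+1)) = cc b n * (((1-b)/2 + n) * (b/2 + n)) := by
  have h32 := (poch32_pos n).ne'
  have hfac : ((n.factorial : ℝ)) ≠ 0 := by exact_mod_cast n.factorial_ne_zero
  have h32' : ((3:ℝ)/2 + n) ≠ 0 := by positivity
  unfold cc
  rw [poch_succ, poch_succ, poch_succ, Nat.factorial_succ]
  push_cast
  field_simp

lemma sum_poly_geom (m : ℕ) {r : ℝ} (h0 : 0 ≤ r) (h1 : r < 1) :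
    Summable (fun n : ℕ => ((n:ℝ)+1)^m * r^n) := by
  rcases eq_or_lt_of_le h0 with h | h
  · apply summable_of_ne_finset_zero (s := {0})
    intro n hn
    simp only [Finset.mem_singleton] at hn
    rw [← h, zero_pow hn, mul_zero]
  · have hs : Summable (fun n : ℕ => (n:ℝ)^m * r^n) :=
      summable_pow_mul_geometric_of_norm_lt_one m (by rwa [Real.norm_eq_abs, abs_of_pos h])
    have hs2 : Summable (fun n : ℕ => ((n+1:ℕ):ℝ)^m * r^(n+1)) := by
      exact ((_root_.summable_nat_add_iff 1).mpr hs)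
    have := hs2.mul_left (1/r)
    apply this.congr
    intro n
    push_cast
    field_simp
    ring

lemma pow_step (K : ℕ) {t : ℝ} (ht : 0 < t) : (t + K) * t^K ≤ (t+1)^K * t := by
  have h : 1 + (K:ℝ) * (1/t) ≤ (1 + 1/t)^K := by
    apply one_add_mul_le_pow
    have : 0 < 1/t := by positivity
    linarith
  have e2 : t + 1 = (1 + 1/t) * t := by field_simp
  calc (t + K) * t^K = (1 + (K:ℝ)*(1/t)) * t^K * t := by field_simp
    _ ≤ (1 + 1/t)^K * t^K * t := by
        have := mul_le_mul_of_nonneg_right h (le_of_lt (mul_pos (pow_pos ht K) ht))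
        calc (1 + (K:ℝ)*(1/t)) * t^K * t = (1 + (K:ℝ)*(1/t)) * (t^K * t) := by ring
          _ ≤ (1 + 1/t)^K * (t^K * t) := this
          _ = (1 + 1/t)^K * t^K * t := by ring
    _ = (t+1)^K * t := by rw [e2, mul_pow]

lemma pow_step2 (K : ℕ) {t : ℝ} (ht : 0 < t) :
    t^(2*K) * (t + K)^2 ≤ (t+1)^(2*K) * t^2 := by
  have h := pow_step K ht
  have h1 : 0 ≤ (t + (K:ℝ)) * t^K := by positivity
  have h2 := mul_self_le_mul_self h1 h
  calc t^(2*K) * (t + K)^2 = ((t + (K:ℝ)) * t^K) * ((t + (K:ℝ)) * t^K) := by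
        rw [two_mul, pow_add]; ring
    _ ≤ ((t+1)^K * t) * ((t+1)^K * t) := h2
    _ = (t+1)^(2*K) * t^2 := by rw [two_mul, pow_add]; ring

lemma cc_bound (b : ℝ) (hb : 0 < b) (K : ℕ) (hK : b ≤ K) :
    ∀ n, |cc b n| ≤ ((n:ℝ)+1)^(2*K) := by
  intro n
  induction n with
  | zero => simp [cc_zero]
  | succ n ih =>
    have ht : (0:ℝ) < (n:ℝ)+1 := by positivity
    have hpos : (0:ℝ) < (3/2+(n:ℝ))*((n:ℝ)+1) := by positivity
    have habs : |cc b (n+1)| * ((3/2+(n:ℝ))*((n:ℝ)+1))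
        = |cc b n| * (|(1-b)/2+(n:ℝ)| * |b/2+(n:ℝ)|) := by
      have h := congrArg abs (cc_rec b n)
      rwa [abs_mul, abs_of_pos hpos, abs_mul, abs_mul] at h
    have hA : |(1-b)/2+(n:ℝ)| ≤ (n:ℝ)+1+K := by
      rw [abs_le]
      constructor
      · have : (0:ℝ) ≤ (n:ℝ) := Nat.cast_nonneg n
        nlinarith
      · nlinarith [Nat.cast_nonneg (α := ℝ) n]
    have hB : |b/2+(n:ℝ)| ≤ (n:ℝ)+1+K := by
      rw [abs_of_pos (by positivity)]
      linarith
    have chain : |cc b n| * (|(1-b)/2+(n:ℝ)| * |b/2+(n:ℝ)|)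
        ≤ ((n:ℝ)+2)^(2*K) * ((3/2+(n:ℝ))*((n:ℝ)+1)) := by
      have s1 : |cc b n| * (|(1-b)/2+(n:ℝ)| * |b/2+(n:ℝ)|)
          ≤ ((n:ℝ)+1)^(2*K) * (((n:ℝ)+1+K) * ((n:ℝ)+1+K)) := by
        apply mul_le_mul ih _ (by positivity) (by positivity)
        exact mul_le_mul hA hB (abs_nonneg _) (by positivity)
      have s2 : ((n:ℝ)+1)^(2*K) * (((n:ℝ)+1+K) * ((n:ℝ)+1+K))
          ≤ ((n:ℝ)+2)^(2*K) * (((n:ℝ)+1)*((n:ℝ)+1)) := by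
        have := pow_step2 K ht
        calc ((n:ℝ)+1)^(2*K) * (((n:ℝ)+1+K) * ((n:ℝ)+1+K))
            = ((n:ℝ)+1)^(2*K) * (((n:ℝ)+1)+K)^2 := by ring
          _ ≤ (((n:ℝ)+1)+1)^(2*K) * ((n:ℝ)+1)^2 := this
          _ = ((n:ℝ)+2)^(2*K) * (((n:ℝ)+1)*((n:ℝ)+1)) := by ring_nf
      have s3 : ((n:ℝ)+2)^(2*K) * (((n:ℝ)+1)*((n:ℝ)+1))
          ≤ ((n:ℝ)+2)^(2*K) * ((3/2+(n:ℝ))*((n:ℝ)+1)) := by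
        apply mul_le_mul_of_nonneg_left _ (by positivity)
        nlinarith
      linarith
    have final : |cc b (n+1)| * ((3/2+(n:ℝ))*((n:ℝ)+1))
        ≤ ((n:ℝ)+2)^(2*K) * ((3/2+(n:ℝ))*((n:ℝ)+1)) := by rw [habs]; exact chain
    have := le_of_mul_le_mul_right final hpos
    calc |cc b (n+1)| ≤ ((n:ℝ)+2)^(2*K) := this
      _ = ((↑(n+1):ℝ)+1)^(2*K) := by push_cast; ring_nf

noncomputable def ff (b x : ℝ) : ℝ := ∑' n : ℕ, cc b n * x^(2*n+1)
noncomputable def ff1 (b x : ℝ) : ℝ := ∑' n : ℕ, cc b n * (2*(n:ℝ)+1) * x^(2*n)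
noncomputable def ff2 (b x : ℝ) : ℝ :=
  ∑' n : ℕ, cc b n * (2*(n:ℝ)+1) * (2*(n:ℝ)) * x^(2*n-1)

section bounds
variable {b : ℝ} {K : ℕ} (hc : ∀ n, |cc b n| ≤ ((n:ℝ)+1)^(2*K))
include hc

lemma bound1 {r y : ℝ} (hy : |y| ≤ r) (n : ℕ) :
    |cc b n * y^(2*n+1)| ≤ (((n:ℝ)+1)^(2*K) * (r^2)^n) * r := by
  have h1 : |y|^(2*n+1) ≤ r^(2*n+1) := pow_le_pow_left₀ (abs_nonneg y) hy _
  calc |cc b n * y^(2*n+1)| = |cc b n| * |y|^(2*n+1) := by rw [abs_mul, abs_pow]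
    _ ≤ ((n:ℝ)+1)^(2*K) * r^(2*n+1) :=
        mul_le_mul (hc n) h1 (by positivity) (by positivity)
    _ = (((n:ℝ)+1)^(2*K) * (r^2)^n) * r := by rw [pow_succ, pow_mul]; ring

lemma bound2 {r y : ℝ} (hy : |y| ≤ r) (n : ℕ) :
    |cc b n * (2*(n:ℝ)+1) * y^(2*n)| ≤ 2 * (((n:ℝ)+1)^(2*K+1) * (r^2)^n) := by
  have h1 : |y|^(2*n) ≤ r^(2*n) := pow_le_pow_left₀ (abs_nonneg y) hy _
  have h2 : |2*(n:ℝ)+1| = 2*(n:ℝ)+1 := abs_of_pos (by positivity)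
  calc |cc b n * (2*(n:ℝ)+1) * y^(2*n)| = |cc b n| * (2*(n:ℝ)+1) * |y|^(2*n) := by
        rw [abs_mul, abs_mul, abs_pow, h2]
    _ ≤ ((n:ℝ)+1)^(2*K) * (2*((n:ℝ)+1)) * r^(2*n) := by
        apply mul_le_mul _ h1 (by positivity) (by positivity)
        apply mul_le_mul (hc n) (by linarith) (by positivity) (by positivity)
    _ = 2 * ((((n:ℝ)+1)^(2*K) * ((n:ℝ)+1)) * (r^2)^n) := by rw [pow_mul]; ring
    _ = 2 * (((n:ℝ)+1)^(2*K+1) * (r^2)^n) := by rw [pow_succ ((n:ℝ)+1) (2*K)]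

lemma bound3 {r y : ℝ} (hr : 0 < r) (hy : |y| ≤ r) (n : ℕ) :
    |cc b n * (2*(n:ℝ)+1) * (2*(n:ℝ)) * y^(2*n-1)|
      ≤ (4/r) * (((n:ℝ)+1)^(2*K+2) * (r^2)^n) := by
  cases n with
  | zero => simp; positivity
  | succ m =>
    have e1 : 2*(m+1)-1 = 2*m+1 := by omega
    have hy' : |y|^(2*m+1) ≤ r^(2*m+1) := pow_le_pow_left₀ (abs_nonneg y) hy _
    have hcc : |cc b (m+1)| ≤ ((m:ℝ)+1+1)^(2*K) := by
      have := hc (m+1); push_cast at this; exact this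
    have LHSeq : |cc b (m+1) * (2*((m+1:ℕ):ℝ)+1) * (2*((m+1:ℕ):ℝ)) * y^(2*(m+1)-1)|
        = |cc b (m+1)| * ((2*((m:ℝ)+1)+1) * ((2*((m:ℝ)+1)) * |y|^(2*m+1))) := by
      rw [e1, abs_mul, abs_mul, abs_mul, abs_pow]
      push_cast
      rw [abs_of_pos (by positivity : (0:ℝ) < 2*((m:ℝ)+1)+1),
        abs_of_pos (by positivity : (0:ℝ) < 2*((m:ℝ)+1))]
      ring
    have RHSeq : (4/r) * ((((m+1:ℕ):ℝ)+1)^(2*K+2) * (r^2)^(m+1))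
        = 4 * ((((m:ℝ)+1+1)^(2*K) * ((m:ℝ)+1+1)^2) * r^(2*m+1)) := by
      push_cast
      rw [← pow_mul, show 2*(m+1) = (2*m+1)+1 from by omega, pow_succ, pow_add]
      field_simp
      ring
    rw [LHSeq]
    push_cast
    push_cast at RHSeq
    rw [RHSeq]
    have hP : (0:ℝ) < ((m:ℝ)+1+1)^(2*K) := by positivity
    have hY : (0:ℝ) ≤ |y|^(2*m+1) := by positivity
    have hR : (0:ℝ) ≤ r^(2*m+1) := by positivity
    nlinarith [mul_le_mul hcc hy' hY (le_of_lt hP), Nat.cast_nonneg (α := ℝ) m,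
      mul_nonneg hY (abs_nonneg (cc b (m+1)))]
end bounds

section main
variable {b : ℝ} {K : ℕ} (hc : ∀ n, |cc b n| ≤ ((n:ℝ)+1)^(2*K))
include hc

lemma summable1 {x : ℝ} (hx : |x| < 1) : Summable (fun n => cc b n * x^(2*n+1)) := by
  have h2 : |x|^2 < 1 := by nlinarith [abs_nonneg x]
  exact Summable.of_norm_bounded
    ((sum_poly_geom (2*K) (by positivity) h2).mul_right |x|) (bound1 hc le_rfl)

lemma summable3 {x : ℝ} (hx0 : x ≠ 0) (hx : |x| < 1) :
    Summable (fun n => cc b n * (2*(n:ℝ)+1) * (2*(n:ℝ)) * x^(2*n-1)) := by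
  have h2 : |x|^2 < 1 := by nlinarith [abs_nonneg x]
  have h0 : 0 < |x| := abs_pos.mpr hx0
  exact Summable.of_norm_bounded
    ((sum_poly_geom (2*K+2) (by positivity) h2).mul_left (4/|x|)) (bound3 hc h0 le_rfl)

lemma hasDerivAt_ff {x : ℝ} (hx : |x| < 1) : HasDerivAt (ff b) (ff1 b x) x := by
  set r := (|x|+1)/2 with hr
  have hxr : |x| < r := by rw [hr]; linarith
  have hr1 : r < 1 := by rw [hr]; linarith
  have hr0 : 0 < r := lt_of_le_of_lt (abs_nonneg x) hxr
  have hr2 : r^2 < 1 := by nlinarith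
  have hu : Summable (fun n : ℕ => 2*(((n:ℝ)+1)^(2*K+1) * (r^2)^n)) :=
    (sum_poly_geom (2*K+1) (by positivity) hr2).mul_left 2
  unfold ff ff1
  apply hasDerivAt_tsum_of_isPreconnected (t := Ioo (-r) r) (y₀ := 0)
    (g := fun n y => cc b n * y^(2*n+1))
    (g' := fun n y => cc b n * (2*(n:ℝ)+1) * y^(2*n)) hu isOpen_Ioo
    (convex_Ioo _ _).isPreconnected
  · intro n y _
    have h := (hasDerivAt_pow (2*n+1) y).const_mul (cc b n)
    refine h.congr_deriv ?_
    push_cast [Nat.add_sub_cancel]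
    ring
  · intro n y hy
    rw [Real.norm_eq_abs]
    exact bound2 hc (abs_lt.mpr ⟨hy.1, hy.2⟩).le n
  · exact ⟨by linarith, hr0⟩
  · have : (fun n : ℕ => cc b n * (0:ℝ)^(2*n+1)) = fun _ => (0:ℝ) := by
      funext n; rw [zero_pow (by omega : 2*n+1 ≠ 0), mul_zero]
    rw [this]; exact summable_zero
  · exact abs_lt.mp hxr

lemma hasDerivAt_ff1 {x : ℝ} (hx : |x| < 1) : HasDerivAt (ff1 b) (ff2 b x) x := by
  set r := (|x|+1)/2 with hr
  have hxr : |x| < r := by rw [hr]; linarith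
  have hr1 : r < 1 := by rw [hr]; linarith
  have hr0 : 0 < r := lt_of_le_of_lt (abs_nonneg x) hxr
  have hr2 : r^2 < 1 := by nlinarith
  have hu : Summable (fun n : ℕ => (4/r)*(((n:ℝ)+1)^(2*K+2) * (r^2)^n)) :=
    (sum_poly_geom (2*K+2) (by positivity) hr2).mul_left (4/r)
  unfold ff1 ff2
  apply hasDerivAt_tsum_of_isPreconnected (t := Ioo (-r) r) (y₀ := 0)
    (g := fun n y => cc b n * (2*(n:ℝ)+1) * y^(2*n))
    (g' := fun n y => cc b n * (2*(n:ℝ)+1) * (2*(n:ℝ)) * y^(2*n-1)) hu isOpen_Ioo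
    (convex_Ioo _ _).isPreconnected
  · intro n y _
    have h := (hasDerivAt_pow (2*n) y).const_mul (cc b n * (2*(n:ℝ)+1))
    refine h.congr_deriv ?_
    push_cast
    ring
  · intro n y hy
    rw [Real.norm_eq_abs]
    exact bound3 hc hr0 (abs_lt.mpr ⟨hy.1, hy.2⟩).le n
  · exact ⟨by linarith, hr0⟩
  · apply summable_of_ne_finset_zero (s := {0})
    intro n hn
    simp only [Finset.mem_singleton] at hn
    rw [zero_pow (by omega : 2*n ≠ 0), mul_zero]
  · exact abs_lt.mp hxr

lemma ff_ode {x : ℝ} (hx0 : 0 ≤ x) (hx1 : x < 1) :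
    (1 - x^2) * ff2 b x = (b - b^2) * ff b x := by
  rcases eq_or_lt_of_le hx0 with h | h
  · have h2 : ff2 b 0 = 0 := by
      unfold ff2
      have : (fun n : ℕ => cc b n * (2*(n:ℝ)+1) * (2*(n:ℝ)) * (0:ℝ)^(2*n-1)) = fun _ => (0:ℝ) := by
        funext n
        cases n with
        | zero => simp
        | succ m => rw [zero_pow (by omega : 2*(m+1)-1 ≠ 0), mul_zero]
      rw [this, tsum_zero]
    have h1 : ff b 0 = 0 := by
      unfold ff
      have : (fun n : ℕ => cc b n * (0:ℝ)^(2*n+1)) = fun _ => (0:ℝ) := by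
        funext n; rw [zero_pow (by omega : 2*n+1 ≠ 0), mul_zero]
      rw [this, tsum_zero]
    rw [← h, h2, h1, mul_zero, mul_zero]
  · have hxa : |x| < 1 := by rw [abs_of_pos h]; exact hx1
    have hS := summable3 hc (ne_of_gt h) hxa
    have hshift : Summable (fun n : ℕ =>
        cc b (n+1) * (2*((n+1:ℕ):ℝ)+1) * (2*((n+1:ℕ):ℝ)) * x^(2*(n+1)-1)) := by
      exact (_root_.summable_nat_add_iff
        (f := fun n : ℕ => cc b n * (2*(n:ℝ)+1) * (2*(n:ℝ)) * x^(2*n-1)) 1).mpr hS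
    have hx2S : Summable (fun n : ℕ =>
        x^2 * (cc b n * (2*(n:ℝ)+1) * (2*(n:ℝ)) * x^(2*n-1))) := hS.mul_left _
    have hT : ff2 b x = ∑' n : ℕ,
        cc b (n+1) * (2*((n+1:ℕ):ℝ)+1) * (2*((n+1:ℕ):ℝ)) * x^(2*(n+1)-1) := by
      unfold ff2
      rw [Summable.tsum_eq_zero_add hS]
      have : cc b 0 * (2*((0:ℕ):ℝ)+1) * (2*((0:ℕ):ℝ)) * x^(2*0-1) = 0 := by
        norm_num
      rw [this, zero_add]
    have key : ∀ n : ℕ,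
        cc b (n+1) * (2*((n+1:ℕ):ℝ)+1) * (2*((n+1:ℕ):ℝ)) * x^(2*(n+1)-1)
          - x^2 * (cc b n * (2*(n:ℝ)+1) * (2*(n:ℝ)) * x^(2*n-1))
        = (b - b^2) * (cc b n * x^(2*n+1)) := by
      intro n
      have e1 : 2*(n+1)-1 = 2*n+1 := by omega
      rw [e1]
      cases n with
      | zero =>
        have hrec := cc_rec b 0
        push_cast at hrec ⊢
        norm_num
        linear_combination (4*x) * hrec
      | succ m =>
        have e2 : x^2 * x^(2*(m+1)-1) = x^(2*(m+1)+1) := by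
          rw [show 2*(m+1)-1 = 2*m+1 from by omega,
            show 2*(m+1)+1 = (2*m+1)+2 from by omega, pow_add]
          ring
        have hrec := cc_rec b (m+1)
        push_cast at hrec ⊢
        rw [show x^2 * (cc b (m+1) * (2*((m:ℝ)+1)+1) * (2*((m:ℝ)+1)) * x^(2*(m+1)-1))
            = cc b (m+1) * (2*((m:ℝ)+1)+1) * (2*((m:ℝ)+1)) * (x^2 * x^(2*(m+1)-1)) from by ring,
          e2]
        push_cast
        linear_combination (4*x^(2*(m+1)+1)) * hrec
    calc (1 - x^2) * ff2 b x = ff2 b x - x^2 * ff2 b x := by ring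
      _ = (∑' n : ℕ, cc b (n+1) * (2*((n+1:ℕ):ℝ)+1) * (2*((n+1:ℕ):ℝ)) * x^(2*(n+1)-1))
          - ∑' n : ℕ, x^2 * (cc b n * (2*(n:ℝ)+1) * (2*(n:ℝ)) * x^(2*n-1)) := by
          rw [← hT]
          unfold ff2
          rw [tsum_mul_left]
      _ = ∑' n : ℕ, (cc b (n+1) * (2*((n+1:ℕ):ℝ)+1) * (2*((n+1:ℕ):ℝ)) * x^(2*(n+1)-1)
          - x^2 * (cc b n * (2*(n:ℝ)+1) * (2*(n:ℝ)) * x^(2*n-1))) := by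
          exact (Summable.tsum_sub hshift hx2S).symm
      _ = ∑' n : ℕ, (b - b^2) * (cc b n * x^(2*n+1)) := tsum_congr key
      _ = (b - b^2) * ff b x := by unfold ff; rw [tsum_mul_left]
end main

lemma ff_zero (b : ℝ) : ff b 0 = 0 := by
  unfold ff
  have : (fun n : ℕ => cc b n * (0:ℝ)^(2*n+1)) = fun _ => (0:ℝ) := by
    funext n; rw [zero_pow (by omega : 2*n+1 ≠ 0), mul_zero]
  rw [this, tsum_zero]

lemma ff1_zero (b : ℝ) : ff1 b 0 = 1 := by
  unfold ff1
  rw [tsum_eq_single 0]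
  · simp [cc_zero]
  · intro n hn
    rw [zero_pow (by omega : 2*n ≠ 0), mul_zero]

lemma ff_eq (b x : ℝ) : ff b x = x * twoF1 ((1-b)/2) (b/2) (3/2) (x^2) := by
  unfold ff twoF1
  rw [← tsum_mul_left]
  apply tsum_congr
  intro n
  simp only [cc]
  rw [← pow_mul, pow_succ]
  ring


noncomputable def ww (b x : ℝ) : ℝ := (1 - x^2) ^ ((1-b)/2)
noncomputable def ww1 (b x : ℝ) : ℝ :=
  (-2*x) * (((1-b)/2) * (1 - x^2) ^ ((1-b)/2 - 1))
noncomputable def ww2 (b x : ℝ) : ℝ :=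
  (-2) * (((1-b)/2) * (1 - x^2) ^ ((1-b)/2 - 1))
  + (-2*x) * (((1-b)/2) * ((-2*x) * ((1-b)/2 - 1) * (1 - x^2) ^ ((1-b)/2 - 1 - 1)))

lemma base_hasDeriv (x : ℝ) : HasDerivAt (fun y : ℝ => 1 - y^2) (-2*x) x := by
  have h := (hasDerivAt_pow 2 x).const_sub 1
  simpa using h

lemma hasDerivAt_ww (b : ℝ) {x : ℝ} (hx : x^2 < 1) :
    HasDerivAt (ww b) (ww1 b x) x := by
  have hne : 1 - x^2 ≠ 0 := by nlinarith
  have h := (base_hasDeriv x).rpow_const (p := (1-b)/2) (Or.inl hne)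
  unfold ww ww1
  convert h using 1
  ring

lemma hasDerivAt_ww1 (b : ℝ) {x : ℝ} (hx : x^2 < 1) :
    HasDerivAt (ww1 b) (ww2 b x) x := by
  have hne : 1 - x^2 ≠ 0 := by nlinarith
  have hA : HasDerivAt (fun y : ℝ => -2*y) (-2) x := by
    simpa using (hasDerivAt_id x).const_mul (-2 : ℝ)
  have hB : HasDerivAt (fun y : ℝ => ((1-b)/2) * (1 - y^2) ^ ((1-b)/2 - 1))
      (((1-b)/2) * ((-2*x) * ((1-b)/2 - 1) * (1 - x^2) ^ ((1-b)/2 - 1 - 1))) x := by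
    have h := ((base_hasDeriv x).rpow_const (p := (1-b)/2 - 1) (Or.inl hne)).const_mul ((1-b)/2)
    convert h using 1
  unfold ww1 ww2
  exact hA.mul hB

lemma key_alg (b : ℝ) {x : ℝ} (hx : x^2 < 1) (O O1 O2 : ℝ)
    (hode : (1-x^2)^2 * O2 - 2*(1-b)*x*(1-x^2)*O1 - (1-b^2)*O = 0) :
    (O2 * ww b x + 2*O1*ww1 b x + O*ww2 b x) * (1-x^2) = (b - b^2) * (O * ww b x) := by
  have hy : (0:ℝ) < 1 - x^2 := by nlinarith
  have hyne : (1 - x^2) ≠ 0 := ne_of_gt hy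
  unfold ww ww1 ww2
  have eA : (1-x^2) ^ ((1-b)/2)
      = (1-x^2) ^ ((1-b)/2 - 1 - 1) * (1-x^2) * (1-x^2) := by
    rw [show ((1-b)/2) = ((1-b)/2 - 1 - 1) + 1 + 1 from by ring, Real.rpow_add hy,
      Real.rpow_add hy, Real.rpow_one, show (1-b)/2-1-1+1+1-1-1 = (1-b)/2-1-1 from by ring]
  have eM : (1-x^2) ^ ((1-b)/2 - 1)
      = (1-x^2) ^ ((1-b)/2 - 1 - 1) * (1-x^2) := by
    rw [show ((1-b)/2 - 1) = ((1-b)/2 - 1 - 1) + 1 from by ring, Real.rpow_add hy,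
      Real.rpow_one, show (1-b)/2-1-1+1-1 = (1-b)/2-1-1 from by ring]
  rw [eA, eM]
  linear_combination ((1-x^2) ^ ((1-b)/2 - 1 - 1) * (1-x^2)) * hode

lemma lip_aux (M : ℝ) (hM : 0 ≤ M) (q : ℝ) (hq : |q| ≤ M) :
    LipschitzWith (Real.toNNReal (max 1 M)) (fun p : ℝ×ℝ => (p.2, q*p.1)) := by
  apply LipschitzWith.of_dist_le_mul
  intro p p'
  rw [Prod.dist_eq, Prod.dist_eq, Real.coe_toNNReal _ (by positivity)]
  simp only [Real.dist_eq]
  have hd1 : |p.1 - p'.1| ≤ max |p.1-p'.1| |p.2-p'.2| := le_max_left _ _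
  have hd2 : |p.2 - p'.2| ≤ max |p.1-p'.1| |p.2-p'.2| := le_max_right _ _
  have hm : (1:ℝ) ≤ max 1 M := le_max_left _ _
  have hm2 : M ≤ max 1 M := le_max_right _ _
  apply max_le
  · nlinarith [abs_nonneg (p.1 - p'.1), abs_nonneg (p.2 - p'.2)]
  · have : |q*p.1 - q*p'.1| = |q| * |p.1 - p'.1| := by rw [← abs_mul]; ring_nf
    rw [this]
    nlinarith [abs_nonneg (p.1 - p'.1), abs_nonneg (p.2 - p'.2), abs_nonneg q]

lemma ww_zero (b : ℝ) : ww b 0 = 1 := by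
  unfold ww
  norm_num
lemma ww1_zero (b : ℝ) : ww1 b 0 = 0 := by
  unfold ww1
  norm_num
lemma ww_cancel (b : ℝ) {x : ℝ} (hx : x^2 < 1) :
    ww b x * (1-x^2)^((b-1)/2) = 1 := by
  unfold ww
  rw [← Real.rpow_add (by nlinarith : (0:ℝ) < 1 - x^2),
    show (1-b)/2 + (b-1)/2 = 0 from by ring, Real.rpow_zero]

theorem stmt_5 (b C : ℝ) (hb : 0 < b) (hb1 : b ≠ 1) (Ω : ℝ → ℝ)
    (hΩ : ContDiff ℝ 2 Ω) (h0 : Ω 0 = 0) (h0' : deriv Ω 0 = C)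
    (hode : ∀ x ∈ Ioo (0:ℝ) 1,
      (1 - x^2)^2 * deriv (deriv Ω) x - 2*(1-b)*x*(1 - x^2) * deriv Ω x
        - (1 - b^2) * Ω x = 0) :
    ∀ x ∈ Ioo (0:ℝ) 1,
      Ω x = C * x * (1 - x^2) ^ ((b-1)/2) * twoF1 ((1-b)/2) (b/2) (3/2) (x^2) := by
  intro x₀ hx₀
  obtain ⟨h0x, hx1⟩ := hx₀
  have hx₀2 : x₀^2 < 1 := by nlinarith
  set K : ℕ := ⌈b⌉₊ + 1 with hKdef
  have hK : b ≤ K := by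
    have := Nat.le_ceil b
    push_cast [hKdef]
    push_cast at this
    linarith
  have hc : ∀ n, |cc b n| ≤ ((n:ℝ)+1)^(2*K) := cc_bound b hb K hK
  -- regularity of Ω
  have h11 : ContDiff ℝ ((1:WithTop ℕ∞)+1) Ω := by
    rw [show ((1:WithTop ℕ∞)+1) = 2 from by norm_num]
    exact hΩ
  have hΩ1 : ContDiff ℝ 1 (deriv Ω) := (contDiff_succ_iff_deriv.mp h11).2.2
  have hΩd : Differentiable ℝ Ω := hΩ.differentiable (by norm_num)
  have hΩ'd : Differentiable ℝ (deriv Ω) := hΩ1.differentiable one_ne_zero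
  have hΩc : Continuous Ω := hΩ.continuous
  have hΩ'c : Continuous (deriv Ω) := hΩ1.continuous
  have hΩ''c : Continuous (deriv (deriv Ω)) := hΩ1.continuous_deriv le_rfl
  -- extend the ODE to Ico 0 1 by continuity
  have hodeI : ∀ t ∈ Ico (0:ℝ) 1, (1 - t^2)^2 * deriv (deriv Ω) t
      - 2*(1-b)*t*(1-t^2) * deriv Ω t - (1-b^2) * Ω t = 0 := by
    have hH : Continuous (fun t : ℝ => (1 - t^2)^2 * deriv (deriv Ω) t
        - 2*(1-b)*t*(1-t^2) * deriv Ω t - (1-b^2) * Ω t) := by fun_prop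
    have hEq : EqOn (fun t : ℝ => (1 - t^2)^2 * deriv (deriv Ω) t
        - 2*(1-b)*t*(1-t^2) * deriv Ω t - (1-b^2) * Ω t) (fun _ => 0) (Ioo 0 1) :=
      fun t ht => hode t ht
    have hcl := hEq.closure hH continuous_const
    intro t ht
    have htc : t ∈ closure (Ioo (0:ℝ) 1) := by
      rw [closure_Ioo (by norm_num : (0:ℝ) ≠ 1)]
      exact ⟨ht.1, ht.2.le⟩
    exact hcl htc
  -- the two solution pairs
  set F : ℝ → ℝ × ℝ := fun t =>
    (Ω t * ww b t, deriv Ω t * ww b t + Ω t * ww1 b t) with hFdef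
  set G : ℝ → ℝ × ℝ := fun t => (C * ff b t, C * ff1 b t) with hGdef
  have hF : ∀ t : ℝ, t^2 < 1 → HasDerivAt F
      ((deriv Ω t * ww b t + Ω t * ww1 b t,
        deriv (deriv Ω) t * ww b t + 2 * deriv Ω t * ww1 b t + Ω t * ww2 b t)) t := by
    intro t ht
    have h1 : HasDerivAt (fun t => Ω t * ww b t)
        (deriv Ω t * ww b t + Ω t * ww1 b t) t :=
      (hΩd t).hasDerivAt.mul (hasDerivAt_ww b ht)
    have h2 : HasDerivAt (fun t => deriv Ω t * ww b t + Ω t * ww1 b t)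
        (deriv (deriv Ω) t * ww b t + 2 * deriv Ω t * ww1 b t + Ω t * ww2 b t) t := by
      have := ((hΩ'd t).hasDerivAt.mul (hasDerivAt_ww b ht)).add
        ((hΩd t).hasDerivAt.mul (hasDerivAt_ww1 b ht))
      refine this.congr_deriv ?_
      ring
    exact h1.prodMk h2
  have hG : ∀ t : ℝ, |t| < 1 → HasDerivAt G ((C * ff1 b t, C * ff2 b t)) t := by
    intro t ht
    exact ((hasDerivAt_ff hc ht).const_mul C).prodMk ((hasDerivAt_ff1 hc ht).const_mul C)
  -- the vector field
  set M : ℝ := |b - b^2| / (1 - x₀^2) with hMdef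
  have hMnn : 0 ≤ M := div_nonneg (abs_nonneg _) (by nlinarith)
  set q : ℝ → ℝ := fun t => (b - b^2)/(1 - (min (max t 0) x₀)^2) with hqdef
  have hq : ∀ t, |q t| ≤ M := by
    intro t
    have hs0 : 0 ≤ min (max t 0) x₀ := le_min (le_max_right t 0) h0x.le
    have hs1 : min (max t 0) x₀ ≤ x₀ := min_le_right _ _
    have h2 : 0 < 1 - (min (max t 0) x₀)^2 := by nlinarith
    rw [hqdef]
    simp only []
    rw [abs_div, abs_of_pos h2, hMdef]
    gcongr
    all_goals nlinarith
  have hqt : ∀ t ∈ Ico (0:ℝ) x₀, q t = (b - b^2)/(1 - t^2) := by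
    intro t ht
    rw [hqdef]
    simp only []
    rw [max_eq_left ht.1, min_eq_left ht.2.le]
  have hsub : ∀ t ∈ Icc (0:ℝ) x₀, t^2 < 1 := by
    intro t ht
    have := ht.1; have := ht.2
    nlinarith
  have habs : ∀ t ∈ Icc (0:ℝ) x₀, |t| < 1 := by
    intro t ht
    rw [abs_lt]
    constructor
    · linarith [ht.1]
    · nlinarith [ht.1, ht.2]
  have hv : ∀ t, LipschitzOnWith (Real.toNNReal (max 1 M))
      (fun p : ℝ×ℝ => (p.2, q t * p.1)) univ :=
    fun t => (lip_aux M hMnn (q t) (hq t)).lipschitzOnWith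
  have huniq : EqOn F G (Icc 0 x₀) := by
    apply ODE_solution_unique_of_mem_Icc_right (fun t _ => hv t)
    · intro t ht
      exact (hF t (hsub t ht)).continuousAt.continuousWithinAt
    · intro t ht
      have ht2 : t^2 < 1 := hsub t ⟨ht.1, ht.2.le⟩
      have hodet := hodeI t ⟨ht.1, lt_trans ht.2 hx1⟩
      have halg := key_alg b ht2 (Ω t) (deriv Ω t) (deriv (deriv Ω) t) hodet
      have hne : (1:ℝ) - t^2 ≠ 0 := by nlinarith
      have hsnd : q t * (Ω t * ww b t)
          = deriv (deriv Ω) t * ww b t + 2 * deriv Ω t * ww1 b t + Ω t * ww2 b t := by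
        rw [hqt t ht, div_mul_eq_mul_div, div_eq_iff hne]
        linear_combination -halg
      have hd := (hF t ht2).hasDerivWithinAt (s := Ici t)
      have hpair : (deriv Ω t * ww b t + Ω t * ww1 b t,
          deriv (deriv Ω) t * ww b t + 2 * deriv Ω t * ww1 b t + Ω t * ww2 b t)
          = ((F t).2, q t * (F t).1) := Prod.ext rfl hsnd.symm
      rw [hpair] at hd
      exact hd
    · intro t _; trivial
    · intro t ht
      exact (hG t (habs t ht)).continuousAt.continuousWithinAt
    · intro t ht
      have ht1 : |t| < 1 := habs t ⟨ht.1, ht.2.le⟩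
      have hfo := ff_ode hc ht.1 (lt_trans ht.2 hx1)
      have hne : (1:ℝ) - t^2 ≠ 0 := by nlinarith [hsub t ⟨ht.1, ht.2.le⟩]
      have hsnd : q t * (C * ff b t) = C * ff2 b t := by
        rw [hqt t ht, div_mul_eq_mul_div, div_eq_iff hne]
        linear_combination (-C) * hfo
      have hd := (hG t ht1).hasDerivWithinAt (s := Ici t)
      have hpair : (C * ff1 b t, C * ff2 b t) = ((G t).2, q t * (G t).1) :=
        Prod.ext rfl hsnd.symm
      rw [hpair] at hd
      exact hd
    · intro t _; trivial
    · rw [hFdef, hGdef]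
      simp only []
      rw [h0, h0', ww_zero, ww1_zero, ff_zero, ff1_zero]
      norm_num
  have hend := huniq ⟨h0x.le, le_refl x₀⟩
  have hfst : Ω x₀ * ww b x₀ = C * ff b x₀ := congrArg Prod.fst hend
  have hcan := ww_cancel b hx₀2
  calc Ω x₀ = Ω x₀ * (ww b x₀ * (1-x₀^2)^((b-1)/2)) := by rw [hcan, mul_one]
    _ = (Ω x₀ * ww b x₀) * (1-x₀^2)^((b-1)/2) := by ring
    _ = (C * ff b x₀) * (1-x₀^2)^((b-1)/2) := by rw [hfst]
    _ = C * x₀ * (1-x₀^2)^((b-1)/2) * twoF1 ((1-b)/2) (b/2) (3/2) (x₀^2) := by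
        rw [ff_eq]; ring
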